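/- Let G be a group and Λ = ℤ[G]. Suppose b : Λ̂ × (Λ̂/Λ) → Λ is a Λ-balanced biadditive map which is left Λ-linear in the first variable (b(rλ̂, x) = r·b(λ̂, x)). Then b is identically zero. -/

import Mathlib

section Machinery
open Finset

theorem sum_range_add' (f : ℕ → ℤ) (A B : ℕ) :
    ∑ n ∈ range (A+B), f n = ∑ n ∈ range A, f n + ∑ i ∈ range B, f (A+i) := by
  induction B with
  | zero => simp
  | succ B ih => rw [← Nat.add_assoc, Finset.sum_range_succ, Finset.sum_range_succ, ih]; ring

theorem pow_dvd_zero (M D : ℤ) (hM : 2 ≤ M) (h : ∀ N : ℕ, M ^ N ∣ D) : D = 0 := by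
  by_contra hD
  set N := D.natAbs with hN
  have h1 : M ^ N ≤ |D| := Int.le_of_dvd (abs_pos.mpr hD) ((h N).trans (self_dvd_abs D))
  have h2 : (2:ℤ) ^ N ≤ M ^ N := pow_le_pow_left₀ (by norm_num) hM N
  have h3 : (N : ℤ) < 2 ^ N := by exact_mod_cast (Nat.lt_two_pow_self (n := N))
  have h4 : |D| = (N : ℤ) := Int.abs_eq_natAbs D
  omega

theorem CL0 (v : (ℕ → ℤ) →+ ℤ) (hv : ∀ n, v (fun j => if j = n then 1 else 0) = 0)
    (s : Finset ℕ) : ∀ (F : ℕ → ℤ), (∀ j, j ∉ s → F j = 0) → v F = 0 := by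
  induction s using Finset.induction_on with
  | empty =>
    intro F hF
    obtain rfl : F = 0 := funext fun j => hF j (Finset.notMem_empty j)
    exact map_zero v
  | @insert a s ha ih =>
    intro F hF
    have h1 : v (fun j => F j - F a * (if j = a then 1 else 0)) = 0 := by
      apply ih; intro j hj
      by_cases hja : j = a
      · subst hja; simp
      · simp only [if_neg hja, mul_zero, sub_zero]
        exact hF j (by simp [hja, hj])
    have h2 : v (fun j => F a * (if j = a then 1 else 0)) = 0 := by
      have he : (fun j => F a * (if j = a then (1:ℤ) else 0))
          = F a • (fun j => if j = a then (1:ℤ) else 0) := by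
        funext j; simp [smul_eq_mul]
      rw [he, map_zsmul, hv a, smul_zero]
    have hs : F = (fun j => F j - F a * (if j = a then 1 else 0))
        + (fun j => F a * (if j = a then 1 else 0)) := by
      funext j; simp
    rw [hs, map_add, h1, h2, add_zero]

theorem CL (v : (ℕ → ℤ) →+ ℤ) (hv : ∀ n, v (fun j => if j = n then 1 else 0) = 0) :
    v = 0 := by
  ext a
  show v a = 0
  set c := v a with hc
  suffices hdvd : ∀ m : ℤ, 2 ≤ m → (m - 1) ∣ c by
    by_contra h0
    have habs : (0:ℤ) ≤ |c| := abs_nonneg c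
    have hd := hdvd (|c| + 2) (by omega)
    have hd2 : |c| + 2 - 1 ∣ |c| := hd.trans (self_dvd_abs c)
    have := Int.le_of_dvd (abs_pos.mpr h0) hd2
    omega
  intro m hm
  set trunc : ℕ → (ℕ → ℤ) := fun n j => if n ≤ j then a j else 0 with htrunc
  set z : ℕ → (ℕ → ℤ) := fun N j => if N ≤ j then a j * ∑ i ∈ range (j+1-N), m^i else 0 with hz
  set y : ℕ → ℤ := fun j => a j * ∑ i ∈ range (j+1), m^i with hy
  have key : ∀ N : ℕ, y = (fun j => ∑ n ∈ range N, m^n * trunc n j) + (m^N • z N) := by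
    intro N
    funext j
    show y j = (∑ n ∈ range N, m^n * trunc n j) + m^N * z N j
    by_cases hjN : j < N
    · have hzj : z N j = 0 := by simp only [hz]; rw [if_neg (by omega)]
      rw [hzj, mul_zero, add_zero, hy]
      have e1 : ∑ n ∈ range N, m^n * trunc n j
          = ∑ n ∈ range N, (if n ≤ j then m^n * a j else 0) := by
        apply Finset.sum_congr rfl; intro n _
        simp only [htrunc]
        split <;> simp
      have e2 : Finset.filter (fun n => n ≤ j) (range N) = range (j+1) := by
        ext x; simp; omega
      rw [e1, ← Finset.sum_filter, e2, ← Finset.sum_mul, mul_comm]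
    · have hzj : z N j = a j * ∑ i ∈ range (j+1-N), m^i := by
        simp only [hz]; rw [if_pos (by omega)]
      have e1 : ∑ n ∈ range N, m^n * trunc n j = (∑ n ∈ range N, m^n) * a j := by
        rw [Finset.sum_mul]
        apply Finset.sum_congr rfl; intro n hn
        simp only [htrunc]
        rw [if_pos (by simp at hn; omega)]
      have e2 : j + 1 = N + (j+1-N) := by omega
      rw [e1, hzj, hy]
      show a j * ∑ i ∈ range (j+1), m^i = _
      rw [e2, sum_range_add']
      simp only [pow_add, ← Finset.mul_sum, Nat.add_sub_cancel_left]
      ring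
  have hvtr : ∀ n, v (trunc n) = c := by
    intro n
    have hd0 : v (fun j => a j - trunc n j) = 0 := by
      apply CL0 v hv (range n)
      intro j hj
      simp only [htrunc]
      rw [if_pos (by simpa using hj)]; ring
    have hsplit : a = trunc n + fun j => a j - trunc n j := by funext j; simp
    rw [hc, hsplit, map_add, hd0, add_zero]
  have hyN : ∀ N : ℕ, v y = c * (∑ n ∈ range N, m^n) + m^N * v (z N) := by
    intro N
    rw [key N, map_add, map_zsmul, smul_eq_mul]
    congr 1
    have e3 : (fun j => ∑ n ∈ range N, m^n * trunc n j) = ∑ n ∈ range N, m^n • trunc n := by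
      funext j
      rw [Finset.sum_apply]
      apply Finset.sum_congr rfl; intro n _
      simp [smul_eq_mul]
    rw [e3, map_sum, Finset.mul_sum]
    apply Finset.sum_congr rfl; intro n _
    rw [map_zsmul, smul_eq_mul, hvtr n]; ring
  have hdvdN : ∀ N : ℕ, m^N ∣ ((m-1) * v y + c) := by
    intro N
    have hg : (∑ i ∈ range N, m ^ i) * (m - 1) = m ^ N - 1 := geom_sum_mul m N
    exact ⟨c + (m-1) * v (z N), by rw [hyN N]; linear_combination c * hg⟩
  have hD := pow_dvd_zero m ((m-1) * v y + c) hm hdvdN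
  exact ⟨-(v y), by linarith⟩


theorem greedy {G : Type} [Group G] (K : Subgroup G) [Infinite K] (S : Finset G) :
    ∃ lam : ℕ → G, (∀ n, lam n ∈ K) ∧ Function.Injective lam ∧
      ∀ m n, m ≠ n → (lam m)⁻¹ * lam n ∈ S → (lam m)⁻¹ * lam n = 1 := by
  classical
  set W : Finset G := S.erase 1 with hW
  set bad : List G → Finset G := fun l =>
    l.toFinset.biUnion (fun g => insert g ((W.image (fun w => g * w)) ∪ (W.image (fun w => g * w⁻¹)))) with hbad
  have hex : ∀ l : List G, ∃ k : G, k ∈ K ∧ k ∉ bad l := by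
    intro l
    have hKinf : (K : Set G).Infinite := by
      rw [← Set.infinite_coe_iff]; exact ‹Infinite K›
    obtain ⟨k, hk⟩ := (hKinf.diff (bad l).finite_toSet).nonempty
    exact ⟨k, hk.1, hk.2⟩
  set next : List G → G := fun l => (hex l).choose with hnext
  have hnextK : ∀ l, next l ∈ K := fun l => (hex l).choose_spec.1
  have hnextbad : ∀ l, next l ∉ bad l := fun l => (hex l).choose_spec.2
  set lst : ℕ → List G := fun n => Nat.rec [] (fun _ l => l ++ [next l]) n with hlst
  set lam : ℕ → G := fun n => next (lst n) with hlam
  have hmem : ∀ m n, m < n → lam m ∈ lst n := by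
    intro m n
    induction n with
    | zero => omega
    | succ n ih =>
      intro hmn
      have hsucc : lst (n+1) = lst n ++ [lam n] := rfl
      rw [hsucc, List.mem_append]
      rcases Nat.lt_succ_iff_lt_or_eq.mp hmn with h | h
      · exact Or.inl (ih h)
      · subst h; simp
  -- if lam m is in the list at stage n, then lam n avoids all its bad elements
  have havoid : ∀ m n, m < n → lam n ∉ insert (lam m)
      ((W.image (fun w => lam m * w)) ∪ (W.image (fun w => lam m * w⁻¹))) := by
    intro m n hmn hcon
    exact hnextbad (lst n) (Finset.mem_biUnion.mpr ⟨lam m, List.mem_toFinset.mpr (hmem m n hmn), hcon⟩)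
  have hinj : Function.Injective lam := by
    intro m n hEq
    by_contra hne
    rcases Nat.lt_or_ge m n with h | h
    · exact havoid m n h (by rw [← hEq]; exact Finset.mem_insert_self _ _)
    · have h' : n < m := by omega
      exact havoid n m h' (by rw [hEq]; exact Finset.mem_insert_self _ _)
  refine ⟨lam, fun n => hnextK (lst n), hinj, ?_⟩
  intro m n hmn hconS
  by_contra hne1
  have hcon : (lam m)⁻¹ * lam n ∈ W := Finset.mem_erase.mpr ⟨hne1, hconS⟩
  rcases Nat.lt_or_ge m n with h | h
  · apply havoid m n h
    apply Finset.mem_insert_of_mem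
    apply Finset.mem_union_left
    exact Finset.mem_image.mpr ⟨_, hcon, by group⟩
  · have h' : n < m := by omega
    apply havoid n m h'
    apply Finset.mem_insert_of_mem
    apply Finset.mem_union_right
    exact Finset.mem_image.mpr ⟨_, hcon, by group⟩


theorem exists_countable_subgroup (G : Type) [Group G] [Infinite G] :
    ∃ K : Subgroup G, Countable K ∧ Infinite K := by
  classical
  let f := Infinite.natEmbedding G
  set s : Set G := Set.range f with hs
  refine ⟨Subgroup.closure s, ?_, ?_⟩
  · -- countable
    have hsc : s.Countable := Set.countable_range f
    have hsc2 : (s ∪ s⁻¹).Countable := hsc.union (by rw [← Set.image_inv_eq_inv]; exact hsc.image _)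
    haveI := hsc2.to_subtype
    have hsub : (Subgroup.closure s : Set G) ⊆
        Set.range (fun l : List (s ∪ s⁻¹ : Set G) => (l.map Subtype.val).prod) := by
      intro x hx
      have hx' : x ∈ Submonoid.closure (s ∪ s⁻¹) := by
        rw [← Subgroup.closure_toSubmonoid]; exact hx
      obtain ⟨l, hl, rfl⟩ := Submonoid.exists_list_of_mem_closure hx'
      refine ⟨l.pmap (fun y hy => (⟨y, hy⟩ : (s ∪ s⁻¹ : Set G))) hl, ?_⟩
      simp [List.map_pmap, List.pmap_eq_map]
    have : (Subgroup.closure s : Set G).Countable :=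
      (Set.countable_range _).mono hsub
    exact this.to_subtype
  · have hinf : ((Subgroup.closure s : Subgroup G) : Set G).Infinite :=
      ((Set.infinite_range_of_injective f.injective).mono Subgroup.subset_closure)
    exact Set.infinite_coe_iff.mpr hinf


open Classical in
/-- auxiliary "pointwise sum over a subsingleton-supported family" -/
noncomputable def aux (a : ℕ → ℤ) (w : ℕ → ℤ) : ℤ :=
  if h : ∃ j, w j ≠ 0 then a h.choose * w h.choose else 0

theorem aux_add (a b w : ℕ → ℤ) : aux (a + b) w = aux a w + aux b w := by
  unfold aux; split
  · simp only [Pi.add_apply]; ring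
  · ring

theorem aux_zero (w : ℕ → ℤ) : aux 0 w = 0 := by
  unfold aux; split <;> simp

theorem aux_basis (w : ℕ → ℤ) (hw : ∀ i i', w i ≠ 0 → w i' ≠ 0 → i = i') (j : ℕ) :
    aux (fun i => if i = j then 1 else 0) w = w j := by
  unfold aux; split
  case isTrue h =>
    by_cases hj : h.choose = j
    · simp only [if_pos hj, one_mul, hj]
      simp
    · simp only [if_neg hj, zero_mul]
      by_contra hwj
      exact hj (hw _ _ h.choose_spec (fun h' => hwj h'.symm))
  case isFalse h =>
    push_neg at h
    exact (h j).symm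

theorem core {G : Type} [Group G] (u : (G → ℤ) →+ ℤ)
    (h1 : ∀ F : G → ℤ, {h : G | u (fun x => F (x * h)) ≠ 0}.Finite)
    (K : Subgroup G) [Infinite K] (P : G → ℤ)
    (hTS : ∀ x y : G, P x ≠ 0 → P y ≠ 0 → x⁻¹ * y ∈ K → x = y) :
    u P = 0 := by
  classical
  by_contra hc
  set S : Finset G := (h1 P).toFinset with hS
  have hmemS : ∀ h : G, h ∈ S ↔ u (fun x => P (x * h)) ≠ 0 := by
    intro h; rw [hS, Set.Finite.mem_toFinset]; rfl
  have h1S : (1:G) ∈ S := by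
    rw [hmemS]; simpa using hc
  obtain ⟨lam, hlamK, hlaminj, hlamS⟩ := greedy K S
  have uniq : ∀ (x : G) (i i' : ℕ), P (x * lam i) ≠ 0 → P (x * lam i') ≠ 0 → i = i' := by
    intro x i i' hi hi'
    have hK : (x * lam i)⁻¹ * (x * lam i') ∈ K := by
      have he : (x * lam i)⁻¹ * (x * lam i') = (lam i)⁻¹ * lam i' := by group
      rw [he]; exact K.mul_mem (K.inv_mem (hlamK i)) (hlamK i')
    exact hlaminj (mul_left_cancel (hTS _ _ hi hi' hK))
  set wfun : G → G → ℕ → ℤ := fun κ x j => P (x * (κ * lam j)) with hwfun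
  have hwsub : ∀ κ x : G, ∀ i i', wfun κ x i ≠ 0 → wfun κ x i' ≠ 0 → i = i' := by
    intro κ x i i' hi hi'
    simp only [hwfun, ← mul_assoc] at hi hi'
    exact uniq (x * κ) i i' hi hi'
  set v : G → ((ℕ → ℤ) →+ ℤ) := fun κ =>
    { toFun := fun a => u (fun x => aux a (wfun κ x))
      map_zero' := by
        show u (fun x => aux 0 (wfun κ x)) = 0
        rw [show (fun x => aux 0 (wfun κ x)) = (0 : G → ℤ) from funext fun x => aux_zero _,
          map_zero]
      map_add' := fun a b => by
        show u _ = u _ + u _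
        rw [← map_add]; congr 1; funext x; exact aux_add a b _ } with hv
  have hvbasis : ∀ (κ : G) (j : ℕ),
      v κ (fun i => if i = j then 1 else 0) = u (fun x => P (x * (κ * lam j))) := by
    intro κ j
    show u _ = u _
    congr 1; funext x; exact aux_basis _ (hwsub κ x) j
  have hBfin : ∀ κ : G, {j : ℕ | κ * lam j ∈ S}.Finite := by
    intro κ
    apply Set.Finite.preimage (f := fun j => κ * lam j) ?_ S.finite_toSet
    exact Function.Injective.injOn (fun a b hab => hlaminj (mul_left_cancel hab))
  have heval : ∀ κ : G,
      v κ (fun _ => 1) = ∑ j ∈ (hBfin κ).toFinset, u (fun x => P (x * (κ * lam j))) := by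
    intro κ
    set B := (hBfin κ).toFinset with hB
    have hsplit : (fun _ : ℕ => (1:ℤ))
        = (fun j => if j ∈ B then 1 else 0) + (fun j => if j ∈ B then 0 else 1) := by
      funext j; by_cases h : j ∈ B <;> simp [h]
    rw [hsplit, map_add]
    have hzero : v κ (fun j => if j ∈ B then 0 else 1) = 0 := by
      set w : (ℕ → ℤ) →+ ℤ :=
        { toFun := fun a => v κ (fun j => if j ∈ B then 0 else a j)
          map_zero' := by
            show v κ _ = 0
            rw [show (fun j => if j ∈ B then (0:ℤ) else (0 : ℕ → ℤ) j) = (0 : ℕ → ℤ) from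
              funext fun j => by split <;> rfl]
            exact map_zero _
          map_add' := fun a b => by
            show v κ _ = v κ _ + v κ _
            rw [← map_add]; congr 1; funext j
            by_cases hj : j ∈ B <;> simp [hj] } with hw
      have hwb : ∀ n, w (fun j => if j = n then 1 else 0) = 0 := by
        intro n
        by_cases hn : n ∈ B
        · have he : (fun j => if j ∈ B then (0:ℤ) else if j = n then 1 else 0) = 0 := by
            funext j
            by_cases hj : j ∈ B
            · simp [hj]
            · have : j ≠ n := fun h => hj (h ▸ hn)
              simp [hj, this]
          show v κ _ = 0
          rw [he, map_zero]
        · have he : (fun j => if j ∈ B then (0:ℤ) else if j = n then 1 else 0)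
              = (fun j => if j = n then 1 else 0) := by
            funext j
            by_cases hj : j ∈ B
            · have : j ≠ n := fun h => hn (h ▸ hj)
              simp [hj, this]
            · simp [hj]
          show v κ _ = 0
          rw [he, hvbasis]
          have : κ * lam n ∉ S := by
            intro hcon
            exact hn (by rw [hB, Set.Finite.mem_toFinset]; exact hcon)
          rw [hmemS] at this
          push_neg at this
          exact this
      have hCL := CL w hwb
      have : v κ (fun j => if j ∈ B then 0 else 1) = w (fun _ => 1) := by
        show _ = v κ _
        congr 1
      rw [this, hCL]; rfl
    rw [hzero, add_zero]
    have hsum : (fun j => if j ∈ B then (1:ℤ) else 0)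
        = ∑ j ∈ B, (fun i => if i = j then 1 else 0) := by
      funext i
      rw [Finset.sum_apply]
      rw [Finset.sum_ite_eq B i (fun _ => (1:ℤ))]
    rw [hsum, map_sum]
    exact Finset.sum_congr rfl fun j _ => hvbasis κ j
  set Q : G → ℤ := fun x => aux (fun _ => 1) (wfun 1 x) with hQ
  have hQshift : ∀ κ x : G, Q (x * κ) = aux (fun _ => 1) (wfun κ x) := by
    intro κ x
    show aux (fun _ => 1) (wfun 1 (x * κ)) = aux (fun _ => 1) (wfun κ x)
    congr 1
    funext j
    show P ((x * κ) * (1 * lam j)) = P (x * (κ * lam j))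
    rw [one_mul, mul_assoc]
  have hQn : ∀ n : ℕ, u (fun x => Q (x * (lam n)⁻¹)) = u P := by
    intro n
    have e1 : (fun x => Q (x * (lam n)⁻¹)) = fun x => aux (fun _ => 1) (wfun (lam n)⁻¹ x) :=
      funext fun x => hQshift _ x
    rw [e1]
    have e2 : u (fun x => aux (fun _ => 1) (wfun (lam n)⁻¹ x)) = v (lam n)⁻¹ (fun _ => 1) := rfl
    rw [e2, heval]
    have hBn : (hBfin (lam n)⁻¹).toFinset = {n} := by
      ext j
      rw [Set.Finite.mem_toFinset, Finset.mem_singleton]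
      constructor
      · intro hj
        by_contra hne
        have h1 := hlamS n j (fun h => hne h.symm) hj
        exact hne (hlaminj (inv_mul_eq_one.mp h1)).symm
      · rintro rfl
        show (lam j)⁻¹ * lam j ∈ S
        rw [inv_mul_cancel]; exact h1S
    rw [hBn, Finset.sum_singleton, inv_mul_cancel]
    congr 1; funext x; rw [mul_one]
  have hinf : {h : G | u (fun x => Q (x * h)) ≠ 0}.Infinite := by
    apply Set.Infinite.mono (s := Set.range (fun n => (lam n)⁻¹))
    · rintro _ ⟨n, rfl⟩
      simp only [Set.mem_setOf_eq]
      rw [hQn n]; exact hc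
    · exact Set.infinite_range_of_injective (fun a b hab => hlaminj (inv_injective hab))
  exact hinf (h1 Q)


theorem probA {G : Type} [Group G] (u : (G → ℤ) →+ ℤ)
    (h0 : ∀ F : G → ℤ, (Function.support F).Finite → u F = 0)
    (h1 : ∀ F : G → ℤ, {h : G | u (fun x => F (x * h)) ≠ 0}.Finite)
    (F : G → ℤ) : u F = 0 := by
  classical
  by_cases hG : Finite G
  · exact h0 F (Set.toFinite _)
  · have : Infinite G := not_finite_iff_infinite.mp hG
    obtain ⟨K, hKc, hKi⟩ := exists_countable_subgroup G
    haveI := hKc; haveI := hKi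
    obtain ⟨e⟩ : Nonempty (K ≃ ℕ) := inferInstance
    set t : G → G := fun x => (QuotientGroup.mk x : G ⧸ K).out with hT
    have ht : ∀ x, (t x)⁻¹ * x ∈ K := by
      intro x
      rw [← QuotientGroup.eq]
      exact Quotient.out_eq _
    set idx : G → ℕ := fun x => e ⟨(t x)⁻¹ * x, ht x⟩ with hidx
    set Phi : (ℕ → ℤ) →+ ℤ :=
      { toFun := fun a => u (fun x => a (idx x) * F x)
        map_zero' := by
          show u (fun x => (0 : ℕ → ℤ) (idx x) * F x) = 0
          rw [show (fun x => (0 : ℕ → ℤ) (idx x) * F x) = (0 : G → ℤ) from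
            funext fun x => zero_mul _, map_zero]
        map_add' := fun a b => by
          show u _ = u _ + u _
          rw [← map_add]
          congr 1
          funext x
          show (a (idx x) + b (idx x)) * F x = a (idx x) * F x + b (idx x) * F x
          ring } with hPhi
    have hPhibasis : ∀ j, Phi (fun i => if i = j then 1 else 0) = 0 := by
      intro j
      show u (fun x => (if idx x = j then 1 else 0) * F x) = 0
      apply core u h1 K
      intro x y hx hy hxy
      have hix : idx x = j := by
        by_contra h; simp [h] at hx
      have hiy : idx y = j := by
        by_contra h; simp [h] at hy
      have hxy' : t x = t y := by
        rw [hT]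
        simp only
        rw [show (QuotientGroup.mk x : G ⧸ K) = QuotientGroup.mk y from QuotientGroup.eq.mpr hxy]
      have hsub : ((t x)⁻¹ * x : G) = (t y)⁻¹ * y := by
        have he : e ⟨(t x)⁻¹ * x, ht x⟩ = e ⟨(t y)⁻¹ * y, ht y⟩ := by
          show idx x = idx y
          rw [hix, hiy]
        have := e.injective he
        exact congrArg Subtype.val this
      rw [hxy'] at hsub
      exact mul_left_cancel hsub
    have hPhi0 := CL Phi hPhibasis
    have : Phi (fun _ => 1) = 0 := by rw [hPhi0]; rfl
    calc u F = u (fun x => (fun _ : ℕ => (1:ℤ)) (idx x) * F x) := by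
          congr 1; funext x; exact (one_mul _).symm
    _ = Phi (fun _ => 1) := rfl
    _ = 0 := this

end Machinery



open MulOpposite

noncomputable section

abbrev Lam (G : Type) [Group G] : Type := MonoidAlgebra ℤ G
abbrev LamHat (G : Type) [Group G] : Type := Module.Dual ℤ (Lam G)

variable (G : Type) [Group G]

instance instRSMul : SMul (Lam G)ᵐᵒᵖ (LamHat G) :=
  ⟨fun a f =>
    { toFun := fun x => f (a.unop * x)
      map_add' := fun x y => by show f (a.unop * (x + y)) = _; rw [mul_add, map_add]
      map_smul' := fun m x => by
        show f (a.unop * (m • x)) = m • f (a.unop * x)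
        rw [mul_smul_comm, map_smul] }⟩

@[simp] lemma rsmul_apply (a : (Lam G)ᵐᵒᵖ) (f : LamHat G) (x : Lam G) :
    (a • f) x = f (a.unop * x) := rfl

instance instRMod : Module (Lam G)ᵐᵒᵖ (LamHat G) where
  one_smul f := LinearMap.ext fun x => by simp
  mul_smul a b f := LinearMap.ext fun x => by simp [mul_assoc]
  smul_zero a := LinearMap.ext fun x => by simp
  smul_add a f g := LinearMap.ext fun x => by simp
  add_smul a b f := LinearMap.ext fun x => by simp [add_mul]
  zero_smul f := LinearMap.ext fun x => by simp

instance instLSMul : SMul (Lam G) (LamHat G) :=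
  ⟨fun a f =>
    { toFun := fun x => f (x * a)
      map_add' := fun x y => by show f ((x + y) * a) = _; rw [add_mul, map_add]
      map_smul' := fun m x => by
        show f ((m • x) * a) = m • f (x * a)
        rw [smul_mul_assoc, map_smul] }⟩

@[simp] lemma lsmul_apply (a : Lam G) (f : LamHat G) (x : Lam G) :
    (a • f) x = f (x * a) := rfl

instance instLMod : Module (Lam G) (LamHat G) where
  one_smul f := LinearMap.ext fun x => by simp
  mul_smul a b f := LinearMap.ext fun x => by simp [mul_assoc]
  smul_zero a := LinearMap.ext fun x => by simp
  smul_add a f g := LinearMap.ext fun x => by simp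
  add_smul a b f := LinearMap.ext fun x => by simp [mul_add]
  zero_smul f := LinearMap.ext fun x => by simp

def iota : Lam G →ₗ[ℤ] LamHat G where
  toFun μ :=
    { toFun := fun x => (x * μ).coeff 1
      map_add' := fun x y => by
        show ((x + y) * μ).coeff 1 = (x * μ).coeff 1 + (y * μ).coeff 1
        rw [add_mul]; exact Finsupp.add_apply _ _ _
      map_smul' := fun m x => by
        show ((m • x) * μ).coeff 1 = m • ((x * μ).coeff 1)
        rw [smul_mul_assoc]; exact Finsupp.smul_apply _ _ _ }
  map_add' μ ν := LinearMap.ext fun x => by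
    show (x * (μ + ν)).coeff 1 = (x * μ).coeff 1 + (x * ν).coeff 1
    rw [mul_add]; exact Finsupp.add_apply _ _ _
  map_smul' m μ := LinearMap.ext fun x => by
    show (x * (m • μ)).coeff 1 = m • ((x * μ).coeff 1)
    rw [mul_smul_comm]; exact Finsupp.smul_apply _ _ _

def iotaL : Lam G →ₗ[Lam G] LamHat G where
  toFun μ := iota G μ
  map_add' μ ν := map_add _ _ _
  map_smul' a μ := LinearMap.ext fun x => by
    show (x * (a • μ)).coeff 1 = (iota G μ) (x * a)
    rw [smul_eq_mul, ← mul_assoc]; rfl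

def aug : LamHat G := ((MonoidAlgebra.lift ℤ ℤ G) 1).toLinearMap


-- bridge
def phi (F : G → ℤ) : LamHat G :=
  (Finsupp.linearCombination ℤ F).comp (MonoidAlgebra.coeffLinearEquiv ℤ).toLinearMap

lemma phi_single (F : G → ℤ) (g : G) (c : ℤ) :
    phi G F (MonoidAlgebra.single g c) = c * F g := by
  show Finsupp.linearCombination ℤ F (Finsupp.single g c) = c * F g
  rw [Finsupp.linearCombination_single, smul_eq_mul]

lemma phi_add (F F' : G → ℤ) : phi G (F + F') = phi G F + phi G F' := by
  apply LinearMap.ext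
  intro μ
  show Finsupp.linearCombination ℤ (F + F') μ.coeff = _
  rw [Finsupp.linearCombination_apply]
  have : (μ.coeff.sum fun a c => c • (F + F') a) = (μ.coeff.sum fun a c => c • F a + c • F' a) := by
    apply Finsupp.sum_congr
    intro g _
    simp [Pi.add_apply, smul_eq_mul]; ring
  rw [this, Finsupp.sum_add]
  rfl

lemma phi_eq (f : LamHat G) : f = phi G (fun g => f (MonoidAlgebra.single g 1)) := by
  apply LinearMap.ext
  intro μ
  induction μ using MonoidAlgebra.induction_on with
  | of g => rw [MonoidAlgebra.of_apply, phi_single]; simp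
  | add a b ha hb => rw [map_add, map_add, ha, hb]
  | smul r a ha => rw [map_smul, map_smul, ha]

lemma phi_translate (F : G → ℤ) (h : G) :
    (MonoidAlgebra.single h (1:ℤ) : Lam G) • phi G F = phi G (fun x => F (x * h)) := by
  apply LinearMap.ext
  intro μ
  induction μ using MonoidAlgebra.induction_on with
  | of g =>
    show phi G F ((MonoidAlgebra.of ℤ G g) * MonoidAlgebra.single h 1) = _
    rw [MonoidAlgebra.of_apply, MonoidAlgebra.single_mul_single, one_mul, phi_single, phi_single]
  | add a b ha hb =>
    show phi G F ((a + b) * _) = _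
    rw [add_mul, map_add, map_add]
    exact congrArg₂ (· + ·) ha hb
  | smul r a ha =>
    show phi G F ((r • a) * _) = _
    rw [smul_mul_assoc, map_smul, map_smul]
    exact congrArg (r • ·) ha

lemma phi_finsupp (F : G → ℤ) (hF : (Function.support F).Finite) :
    ∃ ν : Lam G, phi G F = iota G ν := by
  classical
  have hinv : (Function.support fun g : G => F g⁻¹).Finite := by
    apply Set.Finite.preimage _ hF
    exact Function.Injective.injOn (fun a b hab => by simpa using congrArg (·⁻¹) hab)
  refine ⟨MonoidAlgebra.ofCoeff (Finsupp.ofSupportFinite (fun g => F g⁻¹) hinv), ?_⟩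
  apply LinearMap.ext
  intro μ
  induction μ using MonoidAlgebra.induction_on with
  | of g =>
    rw [MonoidAlgebra.of_apply, phi_single]
    show _ = ((MonoidAlgebra.single g 1) * _).coeff 1
    rw [MonoidAlgebra.coeff_single_mul_apply]
    simp [Finsupp.ofSupportFinite]
    show F g = F g⁻¹⁻¹
    rw [inv_inv]
  | add a b ha hb => rw [map_add, map_add, ha, hb]
  | smul r a ha => rw [map_smul, map_smul, ha]


/-- For `Λ = ℤ[G]`, any `Λ`-balanced biadditive map
`b : Λ̂ × (Λ̂/Λ) → Λ` which is left `Λ`-linear in the first variable is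
identically zero.  Here `Λ̂ = Hom_ℤ(Λ, ℤ)` is the coinduced `(Λ,Λ)`-bimodule,
`Λ ⊆ Λ̂` is the range of the canonical inclusion `ι`, `Λ̂/Λ` is the quotient
left `Λ`-module, and `Λ`-balanced means `b(λ̂·s, x) = b(λ̂, s·x)`. -/
theorem stmt15 (G : Type) [Group G]
    (b : LamHat G →+ ((LamHat G ⧸ LinearMap.range (iotaL G)) →+ Lam G))
    (hlin : ∀ (r : Lam G) (f : LamHat G) (x : LamHat G ⧸ LinearMap.range (iotaL G)),
      b (r • f) x = r * b f x)
    (hbal : ∀ (s : Lam G) (f : LamHat G) (x : LamHat G ⧸ LinearMap.range (iotaL G)),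
      b (op s • f) x = b f (s • x)) :
    b = 0 := by
  classical
  -- Step 0: abbreviations
  have hmksurj := Submodule.Quotient.mk_surjective (LinearMap.range (iotaL G))
  -- A bridge lemma: additive functionals on LamHat vanishing on iota-range with
  -- finite translate-support vanish identically.
  have lemA : ∀ (u : LamHat G →+ ℤ),
      (∀ μ : Lam G, u (iota G μ) = 0) →
      (∀ f : LamHat G, {h : G | u ((MonoidAlgebra.single h (1:ℤ) : Lam G) • f) ≠ 0}.Finite) →
      ∀ f, u f = 0 := by
    intro u h0 hfin f
    set u' : (G → ℤ) →+ ℤ :=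
      { toFun := fun F => u (phi G F)
        map_zero' := by
          show u (phi G 0) = 0
          have : phi G (0 : G → ℤ) = 0 := by
            apply LinearMap.ext; intro μ
            show Finsupp.linearCombination ℤ (0 : G → ℤ) μ.coeff = 0
            rw [Finsupp.linearCombination_apply]
            simp
          rw [this, map_zero]
        map_add' := fun F F' => by
          show u (phi G (F + F')) = _
          rw [phi_add, map_add] } with hu'
    have h0' : ∀ F : G → ℤ, (Function.support F).Finite → u' F = 0 := by
      intro F hF
      obtain ⟨ν, hν⟩ := phi_finsupp G F hF
      show u (phi G F) = 0
      rw [hν]; exact h0 ν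
    have h1' : ∀ F : G → ℤ, {h : G | u' (fun x => F (x * h)) ≠ 0}.Finite := by
      intro F
      have : {h : G | u' (fun x => F (x * h)) ≠ 0}
          = {h : G | u ((MonoidAlgebra.single h (1:ℤ) : Lam G) • phi G F) ≠ 0} := by
        ext h
        simp only [Set.mem_setOf_eq]
        rw [show u' (fun x => F (x * h)) = u (phi G (fun x => F (x * h))) from rfl,
          phi_translate]
      rw [this]
      exact hfin (phi G F)
    have := probA u' h0' h1' (fun g => f (MonoidAlgebra.single g 1))
    calc u f = u (phi G (fun g => f (MonoidAlgebra.single g 1))) := by rw [← phi_eq]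
    _ = 0 := this
  -- coefficient extraction
  have hcoef : ∀ (μ : Lam G) (h : G), (MonoidAlgebra.single h (1:ℤ) * μ).coeff 1 = μ.coeff h⁻¹ := by
    intro μ h
    rw [MonoidAlgebra.coeff_single_mul_apply]
    rw [one_mul, mul_one]
  -- op-smul on iota 1
  have hop : ∀ h : G, (op (MonoidAlgebra.single h (1:ℤ) : Lam G)) • (iota G 1) =
      iota G (MonoidAlgebra.single h (1:ℤ)) := by
    intro h
    apply LinearMap.ext
    intro μ
    rw [rsmul_apply]
    show (iota G 1) ((MonoidAlgebra.single h (1:ℤ) : Lam G) * μ)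
      = ((μ * MonoidAlgebra.single h 1 : Lam G)).coeff 1
    show ((MonoidAlgebra.single h (1:ℤ) : Lam G) * μ * 1).coeff 1
      = ((μ * MonoidAlgebra.single h 1 : Lam G)).coeff 1
    rw [mul_one, hcoef, MonoidAlgebra.coeff_mul_single_apply, one_mul, mul_one]
  have hsingle_smul : ∀ h : G, (MonoidAlgebra.single h (1:ℤ) : Lam G) • (iota G 1)
      = iota G (MonoidAlgebra.single h (1:ℤ)) := by
    intro h
    have := (iotaL G).map_smul (MonoidAlgebra.single h (1:ℤ)) 1
    have h2 : (MonoidAlgebra.single h (1:ℤ) : Lam G) • (1 : Lam G)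
        = MonoidAlgebra.single h (1:ℤ) := by
      rw [smul_eq_mul, mul_one]
    rw [h2] at this
    exact this.symm
  -- Step 1: b (iota 1) x = 0 for all x
  have step1 : ∀ x, b (iota G 1) x = 0 := by
    set u₁ : LamHat G →+ ℤ :=
      { toFun := fun f => (b (iota G 1) (Submodule.Quotient.mk f)).coeff 1
        map_zero' := by
          show (b (iota G 1) (Submodule.Quotient.mk (0 : LamHat G))).coeff 1 = 0
          rw [show (Submodule.Quotient.mk (0 : LamHat G) :
            LamHat G ⧸ LinearMap.range (iotaL G)) = 0 from rfl, map_zero]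
          rfl
        map_add' := fun f g => by
          show (b (iota G 1) (Submodule.Quotient.mk (f + g))).coeff 1 = _
          rw [show (Submodule.Quotient.mk (f + g) :
            LamHat G ⧸ LinearMap.range (iotaL G)) = Submodule.Quotient.mk f
            + Submodule.Quotient.mk g from rfl, map_add]
          rfl } with hu₁
    have key : ∀ (h : G) (f : LamHat G),
        u₁ ((MonoidAlgebra.single h (1:ℤ) : Lam G) • f)
          = (b (iota G 1) (Submodule.Quotient.mk f)).coeff h⁻¹ := by
      intro h f
      show (b (iota G 1) (Submodule.Quotient.mk
        ((MonoidAlgebra.single h (1:ℤ) : Lam G) • f))).coeff 1 = _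
      rw [show (Submodule.Quotient.mk ((MonoidAlgebra.single h (1:ℤ) : Lam G) • f) :
            LamHat G ⧸ LinearMap.range (iotaL G))
          = (MonoidAlgebra.single h (1:ℤ) : Lam G) • Submodule.Quotient.mk f from
          Submodule.Quotient.mk_smul _ _ _]
      rw [← hbal, hop, ← hsingle_smul, hlin, hcoef]
    have h0 : ∀ μ : Lam G, u₁ (iota G μ) = 0 := by
      intro μ
      show (b (iota G 1) (Submodule.Quotient.mk (iota G μ))).coeff 1 = 0
      have : (Submodule.Quotient.mk (iota G μ) :
          LamHat G ⧸ LinearMap.range (iotaL G)) = 0 := by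
        rw [Submodule.Quotient.mk_eq_zero]
        exact ⟨μ, rfl⟩
      rw [this, map_zero]
      rfl
    have hfin : ∀ f : LamHat G,
        {h : G | u₁ ((MonoidAlgebra.single h (1:ℤ) : Lam G) • f) ≠ 0}.Finite := by
      intro f
      have : {h : G | u₁ ((MonoidAlgebra.single h (1:ℤ) : Lam G) • f) ≠ 0}
          = (fun h : G => h⁻¹) ⁻¹' {g : G | (b (iota G 1) (Submodule.Quotient.mk f)).coeff g ≠ 0} := by
        ext h
        simp only [Set.mem_setOf_eq, Set.mem_preimage]
        rw [key]
      rw [this]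
      apply Set.Finite.preimage
      · exact Function.Injective.injOn (fun a b hab => by simpa using congrArg (·⁻¹) hab)
      · exact (b (iota G 1) (Submodule.Quotient.mk f)).coeff.finite_support
    have hzero := lemA u₁ h0 hfin
    intro x
    obtain ⟨f, rfl⟩ := hmksurj x
    apply MonoidAlgebra.coeff_injective
    apply Finsupp.ext
    intro g
    have := key g⁻¹ f
    rw [inv_inv] at this
    rw [← this, hzero]
    rfl
  -- Step 2: b (iota μ) x = 0
  have step2 : ∀ (μ : Lam G) x, b (iota G μ) x = 0 := by
    intro μ x
    have h1 : iota G μ = μ • iota G 1 := by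
      have := (iotaL G).map_smul μ 1
      have h2 : μ • (1 : Lam G) = μ := by rw [smul_eq_mul, mul_one]
      rw [h2] at this
      exact this
    rw [h1, hlin, step1, mul_zero]
  -- Step 3: full vanishing
  have step3 : ∀ (f : LamHat G) x, b f x = 0 := by
    intro f x
    set u₂ : LamHat G →+ ℤ :=
      { toFun := fun f => (b f x).coeff 1
        map_zero' := by show (b 0 x).coeff 1 = 0; rw [map_zero]; rfl
        map_add' := fun f g => by show (b (f + g) x).coeff 1 = _; rw [map_add]; rfl } with hu₂
    have key2 : ∀ (h : G) (f : LamHat G),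
        u₂ ((MonoidAlgebra.single h (1:ℤ) : Lam G) • f) = (b f x).coeff h⁻¹ := by
      intro h f
      show (b ((MonoidAlgebra.single h (1:ℤ) : Lam G) • f) x).coeff 1 = _
      rw [hlin, hcoef]
    have h0 : ∀ μ : Lam G, u₂ (iota G μ) = 0 := by
      intro μ
      show (b (iota G μ) x).coeff 1 = 0
      rw [step2]
      rfl
    have hfin : ∀ f : LamHat G,
        {h : G | u₂ ((MonoidAlgebra.single h (1:ℤ) : Lam G) • f) ≠ 0}.Finite := by
      intro f
      have : {h : G | u₂ ((MonoidAlgebra.single h (1:ℤ) : Lam G) • f) ≠ 0}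
          = (fun h : G => h⁻¹) ⁻¹' {g : G | (b f x).coeff g ≠ 0} := by
        ext h
        simp only [Set.mem_setOf_eq, Set.mem_preimage]
        rw [key2]
      rw [this]
      apply Set.Finite.preimage
      · exact Function.Injective.injOn (fun a b hab => by simpa using congrArg (·⁻¹) hab)
      · exact (b f x).coeff.finite_support
    have hzero := lemA u₂ h0 hfin
    apply MonoidAlgebra.coeff_injective
    apply Finsupp.ext
    intro g
    have := key2 g⁻¹ f
    rw [inv_inv] at this
    rw [← this, hzero]
    rfl
  ext f x
  rw [step3]
  rfl
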